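/- Let a, b ∈ A_m be two non-invertible symmetric elements. Then there exists a symmetric invertible element x ∈ A_m^× ∩ A_m^s such that a − x^{-1} and b + x are symmetric invertible elements of A_m. (Here * is either the identity or the involution determined by x* = −x.) -/

import Mathlib

open Polynomial

set_option synthInstance.maxHeartbeats 1000000

/-- The truncated polynomial algebra `A_m = k[x]/⟨x^m⟩`. -/
abbrev TruncPoly (k : Type*) [Field k] (m : ℕ) :=
  Polynomial k ⧸ Ideal.span {(Polynomial.X : Polynomial k) ^ m}

/-- The class of `x` in `A_m = k[x]/⟨x^m⟩`. -/
noncomputable def xbar (k : Type*) [Field k] (m : ℕ) : TruncPoly k m :=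
  Ideal.Quotient.mk _ (Polynomial.X : Polynomial k)

lemma trunc_nilpotent_of_not_isUnit {k : Type*} [Field k] {m : ℕ}
    {a : TruncPoly k m} (ha : ¬ IsUnit a) : IsNilpotent a := by
  obtain ⟨p, rfl⟩ := Ideal.Quotient.mk_surjective a
  by_cases hc : p.coeff 0 = 0
  · refine ⟨m, ?_⟩
    rw [← map_pow, Ideal.Quotient.eq_zero_iff_mem]
    exact Ideal.mem_span_singleton.mpr (pow_dvd_pow_of_dvd (X_dvd_iff.mpr hc) m)
  · exfalso
    apply ha
    have h1 : p = C (p.coeff 0) + X * (p /ₘ X) := by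
      conv_lhs => rw [← modByMonic_add_div p X, modByMonic_X]
      rw [coeff_zero_eq_eval_zero]
    have hnil : IsNilpotent (Ideal.Quotient.mk _ (X * (p /ₘ X)) : TruncPoly k m) := by
      refine ⟨m, ?_⟩
      rw [← map_pow, Ideal.Quotient.eq_zero_iff_mem, mul_pow]
      exact Ideal.mem_span_singleton.mpr (Dvd.intro _ rfl)
    have hu : IsUnit (Ideal.Quotient.mk _ (C (p.coeff 0)) : TruncPoly k m) := by
      have : IsUnit (C (p.coeff 0) : Polynomial k) := isUnit_C.mpr (isUnit_iff_ne_zero.mpr hc)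
      exact this.map _
    have := hnil.isUnit_add_left_of_commute hu (Commute.all _ _)
    rwa [← map_add, ← h1] at this

/-- If `a, b ∈ A_m` are non-invertible symmetric elements, then
there is a symmetric invertible `x` such that `a − x⁻¹` and `b + x` are symmetric
invertible elements. Here `*` is either the identity or the involution `x* = −x`. -/
theorem exists_symmetric_unit_sub_add_isUnit_truncPoly
    {k : Type*} [Field k] [Fintype k] (hodd : Odd (Fintype.card k))
    {m : ℕ} (hm : 0 < m)
    (σ : TruncPoly k m →ₐ[k] TruncPoly k m)
    (hσ : σ (xbar k m) = xbar k m ∨ σ (xbar k m) = -xbar k m)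
    (a b : TruncPoly k m)
    (ha : σ a = a) (hb : σ b = b) (ha' : ¬ IsUnit a) (hb' : ¬ IsUnit b) :
    ∃ x : (TruncPoly k m)ˣ, σ (x : TruncPoly k m) = (x : TruncPoly k m) ∧
      σ (a - (↑x⁻¹ : TruncPoly k m)) = a - (↑x⁻¹ : TruncPoly k m) ∧
      IsUnit (a - (↑x⁻¹ : TruncPoly k m)) ∧
      σ (b + (x : TruncPoly k m)) = b + (x : TruncPoly k m) ∧
      IsUnit (b + (x : TruncPoly k m)) := by
  refine ⟨1, by simp, ?_, ?_, ?_, ?_⟩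
  · simp [ha]
  · have hna := trunc_nilpotent_of_not_isUnit ha'
    have : a - ((1 : (TruncPoly k m)ˣ)⁻¹ : (TruncPoly k m)ˣ) = -(1 - a) := by
      simp
    rw [this]
    exact (IsNilpotent.isUnit_one_sub hna).neg
  · simp [hb]
  · have hnb := trunc_nilpotent_of_not_isUnit hb'
    have : b + ((1 : (TruncPoly k m)ˣ) : TruncPoly k m) = 1 - (-b) := by
      rw [Units.val_one]; ring
    rw [this]
    exact IsNilpotent.isUnit_one_sub hnb.neg
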